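/- arXiv:1708.02028 — 4 statements merged into one kernel-verified Lean document; each statement's English description precedes it below -/
import Mathlib

section
/- If G is a claw-free graph of maximum degree at most d with d ≥ 3, then for every edge xy of G, the number c_G(xy) of edges at line-graph distance at most 2 from xy (including xy) satisfies c_G(xy) ≤ (7/6)d² + d. -/
open Classical

variable {V : Type*}

/-- Two edges (as `Sym2 V`) are in conflict: they are at distance at most 2
in the line graph, i.e. they share a vertex or some edge of `G` joins them. -/
def Conflict (G : SimpleGraph V) (e f : Sym2 V) : Prop :=
  ∃ a ∈ e, ∃ b ∈ f, a = b ∨ G.Adj a b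

/-- `C_G(e)`: the set of edges of `G` in conflict with `e` (including `e`). -/
def CSet (G : SimpleGraph V) (e : Sym2 V) : Set (Sym2 V) :=
  {f | f ∈ G.edgeSet ∧ Conflict G e f}

/-- `PC_G(M, e)`: the private conflict edges of `e` with respect to `M`. -/
def PCSet (G : SimpleGraph V) (M : Set (Sym2 V)) (e : Sym2 V) : Set (Sym2 V) :=
  CSet G e \ ⋃ f ∈ M \ {e}, CSet G f

/-- `M` is an induced matching of `G`. -/
def IsInducedMatching (G : SimpleGraph V) (M : Set (Sym2 V)) : Prop :=
  M ⊆ G.edgeSet ∧ ∀ e ∈ M, ∀ f ∈ M, e ≠ f → ¬ Conflict G e f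

/-- `M` is a maximal induced matching of `G`. -/
def IsMaximalInducedMatching (G : SimpleGraph V) (M : Set (Sym2 V)) : Prop :=
  IsInducedMatching G M ∧ ∀ M', IsInducedMatching G M' → M ⊆ M' → M' = M

/-- `M` is stable under the local-search exchange operation: any two distinct
private conflict edges of an edge of `M` conflict with each other. -/
def LSStable (G : SimpleGraph V) (M : Set (Sym2 V)) : Prop :=
  ∀ e ∈ M, ∀ e' ∈ PCSet G M e, ∀ e'' ∈ PCSet G M e, e' ≠ e'' → e'' ∈ CSet G e'

/-- The edges of `G` with both endpoints in `S`. -/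
def edgesWithin (G : SimpleGraph V) (S : Set V) : Set (Sym2 V) :=
  {e | e ∈ G.edgeSet ∧ ∀ a ∈ e, a ∈ S}

/-- The edges of `G` with one endpoint in `S` and the other in `T`. -/
def edgesBetween (G : SimpleGraph V) (S T : Set V) : Set (Sym2 V) :=
  {e | e ∈ G.edgeSet ∧ ∃ a b : V, e = s(a, b) ∧ a ∈ S ∧ b ∈ T}

/-- `G` has no induced cycle of length 4. -/
def C4Free (G : SimpleGraph V) : Prop :=
  ¬ ∃ a b c d : V, G.Adj a b ∧ G.Adj b c ∧ G.Adj c d ∧ G.Adj d a ∧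
      ¬ G.Adj a c ∧ ¬ G.Adj b d ∧ a ≠ c ∧ b ≠ d

/-- `G` has no induced cycle of length 5. -/
def C5Free (G : SimpleGraph V) : Prop :=
  ¬ ∃ a b c d e : V, G.Adj a b ∧ G.Adj b c ∧ G.Adj c d ∧ G.Adj d e ∧ G.Adj e a ∧
      ¬ G.Adj a c ∧ ¬ G.Adj a d ∧ ¬ G.Adj b d ∧ ¬ G.Adj b e ∧ ¬ G.Adj c e ∧
      a ≠ c ∧ a ≠ d ∧ b ≠ d ∧ b ≠ e ∧ c ≠ e

/-- `G` has no induced `K_{1,3}` (claw). -/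
def ClawFree (G : SimpleGraph V) : Prop :=
  ¬ ∃ v a b c : V, G.Adj v a ∧ G.Adj v b ∧ G.Adj v c ∧
      ¬ G.Adj a b ∧ ¬ G.Adj a c ∧ ¬ G.Adj b c ∧ a ≠ b ∧ a ≠ c ∧ b ≠ c

namespace Stmt13Aux

open Finset

theorem arith_final (a b c d m N : ℝ) (ha : 0 ≤ a) (hb : 0 ≤ b) (hc : 0 ≤ c) (hd : 3 ≤ d)
    (hN : 0 ≤ N)
    (h1 : a + c + 1 ≤ d) (h2 : b + c + 1 ≤ d) (hm0 : 0 ≤ m)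
    (hm : m = 0 ∨ m = d - 1 - (a + b))
    (key : 2*N + (a+b+2*c+2) + a*a + b*b + 2*c + c*c ≤ 2*(a+b+c+2)*d + c*m + c) :
    N ≤ 7/6 * d^2 + d := by
  rcases hm with hm | hm
  · nlinarith [sq_nonneg (a + c + 1 - d), sq_nonneg (b + c + 1 - d), sq_nonneg (3*c - d),
      mul_nonneg (by linarith : (0:ℝ) ≤ d - 1 - c - a) hc,
      mul_nonneg (by linarith : (0:ℝ) ≤ d - 1 - c - b) hc]
  · nlinarith [sq_nonneg (a + c + 1 - d), sq_nonneg (b + c + 1 - d), sq_nonneg (2*c - d),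
      mul_nonneg (by linarith : (0:ℝ) ≤ d - 1 - c - a) hc,
      mul_nonneg (by linarith : (0:ℝ) ≤ d - 1 - c - b) hc]

variable [Fintype V] [DecidableEq V] (G : SimpleGraph V) [DecidableRel G.Adj]

lemma sum_deg_count (T : Finset V) :
    ∑ v ∈ T, G.degree v = ∑ e ∈ G.edgeFinset, #(T.filter (· ∈ e)) := by
  have h1 : ∀ v : V, G.degree v = #(G.edgeFinset.filter (v ∈ ·)) := by
    intro v
    rw [← SimpleGraph.card_incidenceFinset_eq_degree, SimpleGraph.incidenceFinset_eq_filter]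
  calc ∑ v ∈ T, G.degree v = ∑ v ∈ T, ∑ e ∈ G.edgeFinset, if v ∈ e then 1 else 0 := by
        simp only [h1, Finset.card_filter]
    _ = ∑ e ∈ G.edgeFinset, ∑ v ∈ T, if v ∈ e then 1 else 0 := Finset.sum_comm
    _ = _ := by simp only [Finset.card_filter]

lemma meets_within_bound (T : Finset V) :
    #(G.edgeFinset.filter fun e => ∃ a ∈ e, a ∈ T)
      + #(G.edgeFinset.filter fun e => ∀ a ∈ e, a ∈ T) ≤ ∑ v ∈ T, G.degree v := by
  classical
  set EM := G.edgeFinset.filter fun e => ∃ a ∈ e, a ∈ T with hEM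
  set ET := G.edgeFinset.filter fun e => ∀ a ∈ e, a ∈ T with hET
  have hsub : ET ⊆ EM := by
    intro e he
    rw [hET, mem_filter] at he
    rw [hEM, mem_filter]
    refine ⟨he.1, ?_⟩
    induction e with
    | h u v => exact ⟨u, Sym2.mem_mk_left u v, he.2 u (Sym2.mem_mk_left u v)⟩
  rw [sum_deg_count]
  have key : ∀ e ∈ EM, (if e ∈ ET then 2 else 1) ≤ #(T.filter (· ∈ e)) := by
    intro e he
    rw [hEM, mem_filter] at he
    obtain ⟨heE, a, hae, haT⟩ := he
    by_cases heT : e ∈ ET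
    · rw [if_pos heT]
      rw [hET, mem_filter] at heT
      have hnd : ¬ e.IsDiag := SimpleGraph.not_isDiag_of_mem_edgeFinset heT.1
      induction e with
      | h u v =>
        have huv : u ≠ v := by simpa [Sym2.isDiag_iff_proj_eq] using hnd
        have : ({u, v} : Finset V) ⊆ T.filter (· ∈ s(u,v)) := by
          intro z hz
          rw [mem_insert, mem_singleton] at hz
          rcases hz with rfl | rfl <;>
            exact mem_filter.2 ⟨heT.2 z (by simp), by simp⟩
        calc 2 = #({u, v} : Finset V) := (Finset.card_pair huv).symm
          _ ≤ _ := Finset.card_le_card this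
    · rw [if_neg heT]
      exact Finset.card_pos.2 ⟨a, mem_filter.2 ⟨haT, hae⟩⟩
  calc #EM + #ET = ∑ e ∈ EM, (1 + if e ∈ ET then 1 else 0) := by
        rw [Finset.sum_add_distrib, Finset.sum_const, smul_eq_mul, mul_one]
        congr 1
        rw [← Finset.card_filter, Finset.filter_mem_eq_inter, Finset.inter_eq_right.2 hsub]
    _ ≤ ∑ e ∈ EM, #(T.filter (· ∈ e)) := by
        refine Finset.sum_le_sum fun e he => ?_
        have := key e he
        by_cases h : e ∈ ET
        · simp only [if_pos h] at this ⊢; omega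
        · simp only [if_neg h] at this ⊢; omega
    _ ≤ ∑ e ∈ G.edgeFinset, #(T.filter (· ∈ e)) :=
        Finset.sum_le_sum_of_subset (Finset.filter_subset _ _)

lemma within_double (T : Finset V) :
    ∑ v ∈ T, #(G.neighborFinset v ∩ T)
      ≤ 2 * #(G.edgeFinset.filter fun e => ∀ a ∈ e, a ∈ T) := by
  classical
  set ET := G.edgeFinset.filter fun e => ∀ a ∈ e, a ∈ T with hET
  have step1 : ∀ v ∈ T, #(G.neighborFinset v ∩ T) ≤ #(ET.filter (v ∈ ·)) := by
    intro v hv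
    refine Finset.card_le_card_of_injOn (fun w => s(v, w)) ?_ ?_
    · intro w hw
      rw [Finset.mem_coe, mem_inter, SimpleGraph.mem_neighborFinset] at hw
      refine mem_filter.2 ⟨mem_filter.2 ⟨SimpleGraph.mem_edgeFinset.2 hw.1, ?_⟩, by simp⟩
      intro z hz
      rw [Sym2.mem_iff] at hz
      rcases hz with rfl | rfl
      · exact hv
      · exact hw.2
    · intro w _ w' _ h
      rwa [Sym2.congr_right] at h
  have step2 : ∑ v ∈ T, #(ET.filter (v ∈ ·)) = ∑ e ∈ ET, #(T.filter (· ∈ e)) := by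
    calc ∑ v ∈ T, #(ET.filter (v ∈ ·)) = ∑ v ∈ T, ∑ e ∈ ET, if v ∈ e then 1 else 0 := by
          simp only [Finset.card_filter]
      _ = ∑ e ∈ ET, ∑ v ∈ T, if v ∈ e then 1 else 0 := Finset.sum_comm
      _ = _ := by simp only [Finset.card_filter]
  have step3 : ∀ e ∈ ET, #(T.filter (· ∈ e)) ≤ 2 := by
    intro e _
    induction e with
    | h u w =>
      have : T.filter (· ∈ s(u,w)) ⊆ {u, w} := by
        intro z hz
        rw [mem_filter, Sym2.mem_iff] at hz
        rcases hz.2 with rfl | rfl <;> simp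
      refine (Finset.card_le_card this).trans ?_
      exact (Finset.card_insert_le u {w}).trans (by simp)
  calc ∑ v ∈ T, #(G.neighborFinset v ∩ T) ≤ ∑ v ∈ T, #(ET.filter (v ∈ ·)) :=
        Finset.sum_le_sum step1
    _ = ∑ e ∈ ET, #(T.filter (· ∈ e)) := step2
    _ ≤ ∑ e ∈ ET, 2 := Finset.sum_le_sum step3
    _ = 2 * #ET := by rw [Finset.sum_const, smul_eq_mul, mul_comm]

set_option maxHeartbeats 1000000 in
theorem main_aux (d : ℕ) (hd : 3 ≤ d)
    (hΔ : ∀ v : V, G.degree v ≤ d) (hclaw : ClawFree G)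
    (x y : V) (hxy : G.Adj x y) :
    ((CSet G s(x, y)).ncard : ℝ) ≤ (7 / 6) * (d : ℝ) ^ 2 + (d : ℝ) := by
  classical
  have claw : ∀ v a b c : V, G.Adj v a → G.Adj v b → G.Adj v c → ¬G.Adj a b → ¬G.Adj a c →
      ¬G.Adj b c → a ≠ b → a ≠ c → b ≠ c → False := fun v a b c h1 h2 h3 n1 n2 n3 e1 e2 e3 =>
    hclaw ⟨v, a, b, c, h1, h2, h3, n1, n2, n3, e1, e2, e3⟩
  have hxny : x ≠ y := G.ne_of_adj hxy
  have nbmem : ∀ u w : V, w ∈ G.neighborFinset u ↔ G.Adj u w := fun u w =>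
    SimpleGraph.mem_neighborFinset G u w
  set A := (G.neighborFinset x \ G.neighborFinset y).erase y with hA
  set B := (G.neighborFinset y \ G.neighborFinset x).erase x with hB
  set C := G.neighborFinset x ∩ G.neighborFinset y with hCdef
  set T := insert x (insert y (A ∪ B ∪ C)) with hT
  have hmA : ∀ u : V, u ∈ A ↔ G.Adj x u ∧ ¬ G.Adj y u ∧ u ≠ y := by
    intro u
    rw [hA, mem_erase, mem_sdiff, SimpleGraph.mem_neighborFinset, SimpleGraph.mem_neighborFinset]
    tauto
  have hmB : ∀ u : V, u ∈ B ↔ G.Adj y u ∧ ¬ G.Adj x u ∧ u ≠ x := by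
    intro u
    rw [hB, mem_erase, mem_sdiff, SimpleGraph.mem_neighborFinset, SimpleGraph.mem_neighborFinset]
    tauto
  have hmC : ∀ u : V, u ∈ C ↔ G.Adj x u ∧ G.Adj y u := by
    intro u
    rw [hCdef, mem_inter, SimpleGraph.mem_neighborFinset, SimpleGraph.mem_neighborFinset]
  -- non-membership facts
  have hxA : x ∉ A := fun h => G.irrefl ((hmA x).1 h).1
  have hyA : y ∉ A := fun h => ((hmA y).1 h).2.2 rfl
  have hxB : x ∉ B := fun h => ((hmB x).1 h).2.2 rfl
  have hyB : y ∉ B := fun h => G.irrefl ((hmB y).1 h).1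
  have hxC : x ∉ C := fun h => G.irrefl ((hmC x).1 h).1
  have hyC : y ∉ C := fun h => G.irrefl ((hmC y).1 h).2
  have hdisjAB : Disjoint A B := by
    rw [Finset.disjoint_left]
    exact fun u hu hu' => ((hmB u).1 hu').2.1 ((hmA u).1 hu).1
  have hdisjAC : Disjoint A C := by
    rw [Finset.disjoint_left]
    exact fun u hu hu' => ((hmA u).1 hu).2.1 ((hmC u).1 hu').2
  have hdisjBC : Disjoint B C := by
    rw [Finset.disjoint_left]
    exact fun u hu hu' => ((hmB u).1 hu).2.1 ((hmC u).1 hu').1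
  have hdisjABC : Disjoint (A ∪ B) C := by
    rw [Finset.disjoint_union_left]; exact ⟨hdisjAC, hdisjBC⟩
  -- neighborhood decomposition
  have hnbx : G.neighborFinset x = insert y (A ∪ C) := by
    ext u
    rw [SimpleGraph.mem_neighborFinset, mem_insert, mem_union, hmA, hmC]
    constructor
    · intro h
      by_cases huy : u = y
      · exact Or.inl huy
      · by_cases hyu : G.Adj y u
        · exact Or.inr (Or.inr ⟨h, hyu⟩)
        · exact Or.inr (Or.inl ⟨h, hyu, huy⟩)
    · rintro (rfl | ⟨h, -⟩ | ⟨h, -⟩) <;> first | exact hxy | exact h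
  have hnby : G.neighborFinset y = insert x (B ∪ C) := by
    ext u
    rw [SimpleGraph.mem_neighborFinset, mem_insert, mem_union, hmB, hmC]
    constructor
    · intro h
      by_cases hux : u = x
      · exact Or.inl hux
      · by_cases hxu : G.Adj x u
        · exact Or.inr (Or.inr ⟨hxu, h⟩)
        · exact Or.inr (Or.inl ⟨h, hxu, hux⟩)
    · rintro (rfl | ⟨h, -⟩ | ⟨-, h⟩) <;> first | exact hxy.symm | exact h
  have hcardx : #A + #C + 1 = G.degree x := by
    rw [← SimpleGraph.card_neighborFinset_eq_degree, hnbx,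
      Finset.card_insert_of_notMem (by rw [mem_union]; tauto),
      Finset.card_union_of_disjoint hdisjAC]
  have hcardy : #B + #C + 1 = G.degree y := by
    rw [← SimpleGraph.card_neighborFinset_eq_degree, hnby,
      Finset.card_insert_of_notMem (by rw [mem_union]; tauto),
      Finset.card_union_of_disjoint hdisjBC]
  have hdx : #A + #C + 1 ≤ d := hcardx ▸ hΔ x
  have hdy : #B + #C + 1 ≤ d := hcardy ▸ hΔ y
  -- T facts
  have hxT : x ∈ T := mem_insert_self _ _
  have hyT : y ∈ T := by rw [hT]; exact mem_insert_of_mem (mem_insert_self _ _)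
  have hAT : A ⊆ T := fun u hu => by
    rw [hT]; exact mem_insert_of_mem (mem_insert_of_mem (mem_union_left _ (mem_union_left _ hu)))
  have hBT : B ⊆ T := fun u hu => by
    rw [hT]; exact mem_insert_of_mem (mem_insert_of_mem (mem_union_left _ (mem_union_right _ hu)))
  have hCT : C ⊆ T := fun u hu => by
    rw [hT]; exact mem_insert_of_mem (mem_insert_of_mem (mem_union_right _ hu))
  have hnbxT : G.neighborFinset x ⊆ T := by
    rw [hnbx]
    intro u hu
    rcases mem_insert.1 hu with rfl | hu
    · exact hyT
    · rcases mem_union.1 hu with h | h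
      · exact hAT h
      · exact hCT h
  have hnbyT : G.neighborFinset y ⊆ T := by
    rw [hnby]
    intro u hu
    rcases mem_insert.1 hu with rfl | hu
    · exact hxT
    · rcases mem_union.1 hu with h | h
      · exact hBT h
      · exact hCT h
  have hynotin : y ∉ A ∪ B ∪ C := by
    rw [mem_union, mem_union]; tauto
  have hxnotin : x ∉ insert y (A ∪ B ∪ C) := by
    rw [mem_insert, mem_union, mem_union]
    push_neg
    refine ⟨hxny, ⟨hxA, hxB⟩, hxC⟩
  have hTcard : #T = #A + #B + #C + 2 := by
    rw [hT, Finset.card_insert_of_notMem hxnotin, Finset.card_insert_of_notMem hynotin,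
      Finset.card_union_of_disjoint hdisjABC, Finset.card_union_of_disjoint hdisjAB]
  have hsplit : ∀ f : V → ℕ, ∑ v ∈ T, f v
      = f x + f y + ((∑ v ∈ A, f v) + (∑ v ∈ B, f v) + (∑ v ∈ C, f v)) := by
    intro f
    rw [hT, Finset.sum_insert hxnotin, Finset.sum_insert hynotin,
      Finset.sum_union hdisjABC, Finset.sum_union hdisjAB]
    ring
  -- cliques
  have hcliqueA : ∀ u ∈ A, ∀ w ∈ A, u ≠ w → G.Adj u w := by
    intro u hu w hw hne
    by_contra hn
    rw [hmA] at hu hw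
    exact claw x u w y hu.1 hw.1 hxy hn (fun h => hu.2.1 h.symm) (fun h => hw.2.1 h.symm)
      hne hu.2.2 hw.2.2
  have hcliqueB : ∀ u ∈ B, ∀ w ∈ B, u ≠ w → G.Adj u w := by
    intro u hu w hw hne
    by_contra hn
    rw [hmB] at hu hw
    exact claw y u w x hu.1 hw.1 hxy.symm hn (fun h => hu.2.1 h.symm) (fun h => hw.2.1 h.symm)
      hne hu.2.2 hw.2.2
  -- per-vertex lower bounds on neighbors inside T
  have hboundA : ∀ v ∈ A, #A + #(G.neighborFinset v ∩ C) ≤ #(G.neighborFinset v ∩ T) := by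
    intro v hv
    have hsubs : insert x ((A.erase v) ∪ (G.neighborFinset v ∩ C)) ⊆ G.neighborFinset v ∩ T := by
      intro u hu
      rcases mem_insert.1 hu with rfl | hu
      · exact mem_inter.2 ⟨(nbmem _ _).2 ((hmA v).1 hv).1.symm, hxT⟩
      · rcases mem_union.1 hu with hu | hu
        · have h1 : u ∈ A := mem_of_mem_erase hu
          have h2 : v ≠ u := fun h => (mem_erase.1 hu).1 h.symm
          exact mem_inter.2 ⟨(nbmem _ _).2 (hcliqueA v hv u h1 h2), hAT h1⟩
        · exact mem_inter.2 ⟨(mem_inter.1 hu).1, hCT (mem_inter.1 hu).2⟩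
    have hxnot : x ∉ (A.erase v) ∪ (G.neighborFinset v ∩ C) := by
      rw [mem_union]
      push_neg
      exact ⟨fun h => hxA (mem_of_mem_erase h), fun h => hxC (mem_inter.1 h).2⟩
    have hdisj : Disjoint (A.erase v) (G.neighborFinset v ∩ C) :=
      Finset.disjoint_left.2 fun u hu hu' =>
        Finset.disjoint_left.1 hdisjAC (mem_of_mem_erase hu) (mem_inter.1 hu').2
    have hcard := Finset.card_le_card hsubs
    rw [Finset.card_insert_of_notMem hxnot, Finset.card_union_of_disjoint hdisj,
      Finset.card_erase_of_mem hv] at hcard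
    have hApos : 1 ≤ #A := Finset.card_pos.2 ⟨v, hv⟩
    omega
  have hboundB : ∀ v ∈ B, #B + #(G.neighborFinset v ∩ C) ≤ #(G.neighborFinset v ∩ T) := by
    intro v hv
    have hsubs : insert y ((B.erase v) ∪ (G.neighborFinset v ∩ C)) ⊆ G.neighborFinset v ∩ T := by
      intro u hu
      rcases mem_insert.1 hu with rfl | hu
      · exact mem_inter.2 ⟨(nbmem _ _).2 ((hmB v).1 hv).1.symm, hyT⟩
      · rcases mem_union.1 hu with hu | hu
        · have h1 : u ∈ B := mem_of_mem_erase hu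
          have h2 : v ≠ u := fun h => (mem_erase.1 hu).1 h.symm
          exact mem_inter.2 ⟨(nbmem _ _).2 (hcliqueB v hv u h1 h2), hBT h1⟩
        · exact mem_inter.2 ⟨(mem_inter.1 hu).1, hCT (mem_inter.1 hu).2⟩
    have hynot : y ∉ (B.erase v) ∪ (G.neighborFinset v ∩ C) := by
      rw [mem_union]
      push_neg
      exact ⟨fun h => hyB (mem_of_mem_erase h), fun h => hyC (mem_inter.1 h).2⟩
    have hdisj : Disjoint (B.erase v) (G.neighborFinset v ∩ C) :=
      Finset.disjoint_left.2 fun u hu hu' =>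
        Finset.disjoint_left.1 hdisjBC (mem_of_mem_erase hu) (mem_inter.1 hu').2
    have hcard := Finset.card_le_card hsubs
    rw [Finset.card_insert_of_notMem hynot, Finset.card_union_of_disjoint hdisj,
      Finset.card_erase_of_mem hv] at hcard
    have hBpos : 1 ≤ #B := Finset.card_pos.2 ⟨v, hv⟩
    omega
  have hboundC : ∀ v ∈ C, 2 + #(G.neighborFinset v ∩ C) + #(G.neighborFinset v ∩ (A ∪ B))
      ≤ #(G.neighborFinset v ∩ T) := by
    intro v hv
    have hvC := (hmC v).1 hv
    have hsubs : insert x (insert y ((G.neighborFinset v ∩ C) ∪ (G.neighborFinset v ∩ (A ∪ B))))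
        ⊆ G.neighborFinset v ∩ T := by
      intro u hu
      rcases mem_insert.1 hu with rfl | hu
      · exact mem_inter.2 ⟨(nbmem _ _).2 hvC.1.symm, hxT⟩
      rcases mem_insert.1 hu with rfl | hu
      · exact mem_inter.2 ⟨(nbmem _ _).2 hvC.2.symm, hyT⟩
      rcases mem_union.1 hu with hu | hu
      · exact mem_inter.2 ⟨(mem_inter.1 hu).1, hCT (mem_inter.1 hu).2⟩
      · rcases mem_union.1 (mem_inter.1 hu).2 with h | h
        · exact mem_inter.2 ⟨(mem_inter.1 hu).1, hAT h⟩
        · exact mem_inter.2 ⟨(mem_inter.1 hu).1, hBT h⟩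
    have hynot : y ∉ (G.neighborFinset v ∩ C) ∪ (G.neighborFinset v ∩ (A ∪ B)) := by
      rw [mem_union]
      push_neg
      constructor
      · exact fun h => hyC (mem_inter.1 h).2
      · intro h
        rcases mem_union.1 (mem_inter.1 h).2 with h' | h'
        · exact hyA h'
        · exact hyB h'
    have hxnot : x ∉ insert y ((G.neighborFinset v ∩ C) ∪ (G.neighborFinset v ∩ (A ∪ B))) := by
      rw [mem_insert, mem_union]
      push_neg
      refine ⟨hxny, fun h => hxC (mem_inter.1 h).2, fun h => ?_⟩
      rcases mem_union.1 (mem_inter.1 h).2 with h' | h'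
      · exact hxA h'
      · exact hxB h'
    have hdisj : Disjoint (G.neighborFinset v ∩ C) (G.neighborFinset v ∩ (A ∪ B)) :=
      Finset.disjoint_left.2 fun u hu hu' =>
        Finset.disjoint_left.1 hdisjABC (mem_inter.1 hu').2 (mem_inter.1 hu).2
    have hcard := Finset.card_le_card hsubs
    rw [Finset.card_insert_of_notMem hxnot, Finset.card_insert_of_notMem hynot,
      Finset.card_union_of_disjoint hdisj] at hcard
    omega
  have hdegC : ∀ w ∈ C, 2 + #(G.neighborFinset w ∩ C) + #(G.neighborFinset w ∩ (A ∪ B)) ≤ d := by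
    intro w hw
    refine le_trans (le_trans (hboundC w hw) (Finset.card_le_card Finset.inter_subset_left)) ?_
    rw [SimpleGraph.card_neighborFinset_eq_degree]
    exact hΔ w
  -- exchange of mixed edge counts
  have hflt : ∀ (v : V) (S : Finset V), G.neighborFinset v ∩ S = S.filter (G.Adj v ·) := by
    intro v S
    ext w
    rw [mem_inter, mem_filter, SimpleGraph.mem_neighborFinset]
    tauto
  have hite : ∀ v w : V, (if G.Adj v w then (1:ℕ) else 0) = if G.Adj w v then 1 else 0 := by
    intro v w
    by_cases h : G.Adj v w
    · rw [if_pos h, if_pos h.symm]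
    · rw [if_neg h, if_neg (fun h' => h h'.symm)]
  have hxch : ∑ v ∈ A ∪ B, #(G.neighborFinset v ∩ C)
      = ∑ v ∈ C, #(G.neighborFinset v ∩ (A ∪ B)) := by
    simp only [hflt, Finset.card_filter]
    rw [Finset.sum_comm]
    exact Finset.sum_congr rfl fun w _ => Finset.sum_congr rfl fun v _ => hite v w
  -- Claim A
  set m := d - 1 - (#A + #B) with hm
  have hQpart : ∀ v ∈ C, #C = 1 + #(G.neighborFinset v ∩ C)
      + #((C.erase v) \ G.neighborFinset v) := by
    intro v hv
    have hset : C = insert v ((G.neighborFinset v ∩ C) ∪ ((C.erase v) \ G.neighborFinset v)) := by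
      ext u
      constructor
      · intro hu
        by_cases huv : u = v
        · exact huv ▸ mem_insert_self _ _
        by_cases hadj : u ∈ G.neighborFinset v
        · exact mem_insert_of_mem (mem_union_left _ (mem_inter.2 ⟨hadj, hu⟩))
        · exact mem_insert_of_mem (mem_union_right _ (mem_sdiff.2 ⟨mem_erase.2 ⟨huv, hu⟩, hadj⟩))
      · intro hu
        rcases mem_insert.1 hu with rfl | hu
        · exact hv
        rcases mem_union.1 hu with hu | hu
        · exact (mem_inter.1 hu).2
        · exact (mem_erase.1 (mem_sdiff.1 hu).1).2
    have hvnb : v ∉ G.neighborFinset v := fun h => G.irrefl ((nbmem _ _).1 h)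
    have hvnot : v ∉ (G.neighborFinset v ∩ C) ∪ ((C.erase v) \ G.neighborFinset v) := by
      rw [mem_union]
      push_neg
      exact ⟨fun h => hvnb (mem_inter.1 h).1, fun h => (mem_erase.1 (mem_sdiff.1 h).1).1 rfl⟩
    have hdisj : Disjoint (G.neighborFinset v ∩ C) ((C.erase v) \ G.neighborFinset v) :=
      Finset.disjoint_left.2 fun u hu hu' => (mem_sdiff.1 hu').2 (mem_inter.1 hu).1
    have hc := congrArg Finset.card hset
    rw [Finset.card_insert_of_notMem hvnot, Finset.card_union_of_disjoint hdisj] at hc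
    omega
  have claimA : ∀ v ∈ C, #C ≤ #(G.neighborFinset v ∩ C)
      + 2 * #(G.neighborFinset v ∩ (A ∪ B)) + m + 1 := by
    intro v hv
    by_cases hcase : #C ≤ #(G.neighborFinset v ∩ C) + m + 1
    · omega
    push_neg at hcase
    have hQv := hQpart v hv
    obtain ⟨w, hwQ⟩ : ((C.erase v) \ G.neighborFinset v).Nonempty := by
      rw [← Finset.card_pos]; omega
    have hwE := Finset.mem_sdiff.1 hwQ
    have hwv : w ≠ v := (Finset.mem_erase.1 hwE.1).1
    have hwC : w ∈ C := (Finset.mem_erase.1 hwE.1).2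
    have hvw : ¬ G.Adj v w := fun h => hwE.2 ((nbmem _ _).2 h)
    have hvC := (hmC v).1 hv
    have hwC' := (hmC w).1 hwC
    have hcov : A ∪ B ⊆ (G.neighborFinset v ∩ (A ∪ B)) ∪ (G.neighborFinset w ∩ (A ∪ B)) := by
      intro u hu
      by_cases h1 : G.Adj v u
      · exact mem_union_left _ (mem_inter.2 ⟨(nbmem _ _).2 h1, hu⟩)
      by_cases h2 : G.Adj w u
      · exact mem_union_right _ (mem_inter.2 ⟨(nbmem _ _).2 h2, hu⟩)
      exfalso
      rcases mem_union.1 hu with hu' | hu'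
      · have huu := (hmA u).1 hu'
        have huv : u ≠ v := fun h => huu.2.1 (h ▸ hvC.2)
        have huw : u ≠ w := fun h => huu.2.1 (h ▸ hwC'.2)
        exact claw x u v w huu.1 hvC.1 hwC'.1 (fun h => h1 h.symm) (fun h => h2 h.symm) hvw
          huv huw (Ne.symm hwv)
      · have huu := (hmB u).1 hu'
        have huv : u ≠ v := fun h => huu.2.1 (h ▸ hvC.1)
        have huw : u ≠ w := fun h => huu.2.1 (h ▸ hwC'.1)
        exact claw y u v w huu.1 hvC.2 hwC'.2 (fun h => h1 h.symm) (fun h => h2 h.symm) hvw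
          huv huw (Ne.symm hwv)
    have hcovcard : #A + #B ≤ #(G.neighborFinset v ∩ (A ∪ B))
        + #(G.neighborFinset w ∩ (A ∪ B)) := by
      calc #A + #B = #(A ∪ B) := (Finset.card_union_of_disjoint hdisjAB).symm
        _ ≤ #((G.neighborFinset v ∩ (A ∪ B)) ∪ (G.neighborFinset w ∩ (A ∪ B))) :=
            Finset.card_le_card hcov
        _ ≤ _ := Finset.card_union_le _ _
    have hQw := hQpart w hwC
    have hQdisj : Disjoint ((C.erase v) \ G.neighborFinset v)
        ((C.erase w) \ G.neighborFinset w) := by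
      refine Finset.disjoint_left.2 fun u hu hu' => ?_
      have h1 := Finset.mem_sdiff.1 hu
      have h2 := Finset.mem_sdiff.1 hu'
      have huC : u ∈ C := (mem_erase.1 h1.1).2
      have huv : u ≠ v := (mem_erase.1 h1.1).1
      have huw : u ≠ w := (mem_erase.1 h2.1).1
      have hnv : ¬ G.Adj v u := fun h => h1.2 ((nbmem _ _).2 h)
      have hnw : ¬ G.Adj w u := fun h => h2.2 ((nbmem _ _).2 h)
      exact claw x u v w ((hmC u).1 huC).1 hvC.1 hwC'.1 (fun h => hnv h.symm)
        (fun h => hnw h.symm) hvw huv huw (Ne.symm hwv)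
    have hQQ : #((C.erase v) \ G.neighborFinset v) + #((C.erase w) \ G.neighborFinset w)
        ≤ #C := by
      rw [← Finset.card_union_of_disjoint hQdisj]
      refine Finset.card_le_card (Finset.union_subset ?_ ?_) <;>
        exact fun u hu => (mem_erase.1 (mem_sdiff.1 hu).1).2
    have hdw := hdegC w hwC
    omega
  -- global edge counting
  set EM := G.edgeFinset.filter (fun e => ∃ a ∈ e, a ∈ T) with hEMdef
  set ET := G.edgeFinset.filter (fun e => ∀ a ∈ e, a ∈ T) with hETdef
  have hNle : (CSet G s(x, y)).ncard ≤ #EM := by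
    have hsub : CSet G s(x, y) ⊆ (EM : Set (Sym2 V)) := by
      rintro f ⟨hfE, a, ha, b, hb, hab⟩
      have hbT : b ∈ T := by
        rcases Sym2.mem_iff.1 ha with rfl | rfl
        · rcases hab with rfl | hab
          · exact hxT
          · exact hnbxT ((nbmem _ _).2 hab)
        · rcases hab with rfl | hab
          · exact hyT
          · exact hnbyT ((nbmem _ _).2 hab)
      exact Finset.mem_coe.2 (mem_filter.2 ⟨SimpleGraph.mem_edgeFinset.2 hfE, b, hb, hbT⟩)
    calc (CSet G s(x, y)).ncard ≤ (EM : Set (Sym2 V)).ncard :=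
          Set.ncard_le_ncard hsub EM.finite_toSet
      _ = #EM := Set.ncard_coe_finset _
  have hE2 : #EM + #ET ≤ ∑ v ∈ T, G.degree v := meets_within_bound G T
  have hE3 : ∑ v ∈ T, #(G.neighborFinset v ∩ T) ≤ 2 * #ET := within_double G T
  have hE4 : ∑ v ∈ T, G.degree v ≤ (#A + #B + #C + 2) * d := by
    calc ∑ v ∈ T, G.degree v ≤ ∑ _v ∈ T, d := Finset.sum_le_sum fun v _ => hΔ v
      _ = #T * d := by rw [Finset.sum_const, smul_eq_mul]
      _ = (#A + #B + #C + 2) * d := by rw [hTcard]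
  have hdTx : #(G.neighborFinset x ∩ T) = #A + #C + 1 := by
    rw [Finset.inter_eq_left.2 hnbxT, SimpleGraph.card_neighborFinset_eq_degree]
    exact hcardx.symm
  have hdTy : #(G.neighborFinset y ∩ T) = #B + #C + 1 := by
    rw [Finset.inter_eq_left.2 hnbyT, SimpleGraph.card_neighborFinset_eq_degree]
    exact hcardy.symm
  have hsumA : #A * #A + ∑ v ∈ A, #(G.neighborFinset v ∩ C)
      ≤ ∑ v ∈ A, #(G.neighborFinset v ∩ T) := by
    calc #A * #A + ∑ v ∈ A, #(G.neighborFinset v ∩ C)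
        = ∑ v ∈ A, (#A + #(G.neighborFinset v ∩ C)) := by
          rw [Finset.sum_add_distrib, Finset.sum_const, smul_eq_mul]
      _ ≤ _ := Finset.sum_le_sum hboundA
  have hsumB : #B * #B + ∑ v ∈ B, #(G.neighborFinset v ∩ C)
      ≤ ∑ v ∈ B, #(G.neighborFinset v ∩ T) := by
    calc #B * #B + ∑ v ∈ B, #(G.neighborFinset v ∩ C)
        = ∑ v ∈ B, (#B + #(G.neighborFinset v ∩ C)) := by
          rw [Finset.sum_add_distrib, Finset.sum_const, smul_eq_mul]
      _ ≤ _ := Finset.sum_le_sum hboundB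
  have hsumCC : #C * 2 + (∑ v ∈ C, #(G.neighborFinset v ∩ C))
        + (∑ v ∈ C, #(G.neighborFinset v ∩ (A ∪ B)))
      ≤ ∑ v ∈ C, #(G.neighborFinset v ∩ T) := by
    calc #C * 2 + (∑ v ∈ C, #(G.neighborFinset v ∩ C))
          + (∑ v ∈ C, #(G.neighborFinset v ∩ (A ∪ B)))
        = ∑ v ∈ C, (2 + #(G.neighborFinset v ∩ C) + #(G.neighborFinset v ∩ (A ∪ B))) := by
          rw [Finset.sum_add_distrib, Finset.sum_add_distrib, Finset.sum_const, smul_eq_mul]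
      _ ≤ _ := Finset.sum_le_sum hboundC
  have hABx : (∑ v ∈ A, #(G.neighborFinset v ∩ C)) + (∑ v ∈ B, #(G.neighborFinset v ∩ C))
      = ∑ v ∈ C, #(G.neighborFinset v ∩ (A ∪ B)) := by
    rw [← Finset.sum_union hdisjAB]
    exact hxch
  have hclaimsum : #C * #C ≤ (∑ v ∈ C, #(G.neighborFinset v ∩ C))
      + 2 * (∑ v ∈ C, #(G.neighborFinset v ∩ (A ∪ B))) + #C * (m + 1) := by
    calc #C * #C = ∑ _v ∈ C, #C := by rw [Finset.sum_const, smul_eq_mul]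
      _ ≤ ∑ v ∈ C, (#(G.neighborFinset v ∩ C) + 2 * #(G.neighborFinset v ∩ (A ∪ B)) + (m + 1)) :=
          Finset.sum_le_sum fun v hv => by have := claimA v hv; omega
      _ = (∑ v ∈ C, #(G.neighborFinset v ∩ C))
            + (∑ v ∈ C, 2 * #(G.neighborFinset v ∩ (A ∪ B))) + #C * (m + 1) := by
          rw [Finset.sum_add_distrib, Finset.sum_add_distrib, Finset.sum_const, smul_eq_mul]
      _ = _ := by rw [← Finset.mul_sum]
  have hsplitdT := hsplit (fun v => #(G.neighborFinset v ∩ T))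
  have hCm : #C * (m + 1) = #C * m + #C := by ring
  have kN : 2 * (CSet G s(x, y)).ncard
        + ((#A + #B + 2 * #C + 2) + #A * #A + #B * #B + 2 * #C + #C * #C)
      ≤ 2 * ((#A + #B + #C + 2) * d) + #C * m + #C := by
    have l1 : 2 * (CSet G s(x, y)).ncard + (∑ v ∈ T, #(G.neighborFinset v ∩ T))
        ≤ 2 * ((#A + #B + #C + 2) * d) := by omega
    rw [hsplitdT, hdTx, hdTy] at l1
    linarith [hsumA, hsumB, hsumCC, hABx, hclaimsum, hCm, l1]
  have hmcases : m = 0 ∨ m + (#A + #B) + 1 = d := by omega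
  have kR := (Nat.cast_le (α := ℝ)).2 kN
  push_cast at kR
  have hmR : (m : ℝ) = 0 ∨ (m : ℝ) = (d : ℝ) - 1 - ((#A : ℝ) + (#B : ℝ)) := by
    rcases hmcases with h | h
    · left; exact_mod_cast h
    · right
      have : ((m : ℝ) + ((#A : ℝ) + (#B : ℝ)) + 1) = (d : ℝ) := by exact_mod_cast h
      linarith
  refine arith_final (#A : ℝ) (#B : ℝ) (#C : ℝ) (d : ℝ) (m : ℝ) _
    (Nat.cast_nonneg _) (Nat.cast_nonneg _) (Nat.cast_nonneg _) (by exact_mod_cast hd)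
    (Nat.cast_nonneg _) (by exact_mod_cast hdx) (by exact_mod_cast hdy)
    (Nat.cast_nonneg _) hmR (by linarith [kR])

end Stmt13Aux

/-- in claw-free graphs, every edge has at most `(7/6)d² + d` conflict edges. -/
theorem stmt13 [Fintype V] (G : SimpleGraph V) (d : ℕ) (hd : 3 ≤ d)
    (hΔ : ∀ v : V, (G.neighborSet v).ncard ≤ d) (hclaw : ClawFree G)
    (x y : V) (hxy : G.Adj x y) :
    ((CSet G s(x, y)).ncard : ℝ) ≤ (7 / 6) * (d : ℝ) ^ 2 + (d : ℝ) := by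
  classical
  letI : DecidableEq V := Classical.decEq V
  letI : DecidableRel G.Adj := Classical.decRel _
  have hdeg : ∀ v : V, G.degree v ≤ d := by
    intro v
    have h := hΔ v
    rwa [show (G.neighborSet v).ncard = G.degree v from by
      rw [Set.ncard_eq_toFinset_card']; rfl] at h
  exact Stmt13Aux.main_aux G d hd hdeg hclaw x y hxy
end

section
/- Let H be a graph whose vertex set is partitioned into sets N_x, N_{xy}, N_y of sizes d_x, d_{xy}, d_y respectively, such that N_x and N_y are cliques in H, and both H[N_x ∪ N_{xy}] and H[N_{xy} ∪ N_y] have independence number at most 2. Then the number of edges of H satisfies m(H) ≥ C(d_x, 2) + C(p, 2) + C(d_{xy} − p, 2) + C(d_y, 2) + p(d_x + d_y) for some integer p with 0 ≤ p ≤ d_{xy}/2, where C(n, 2) denotes the binomial coefficient n choose 2. -/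
open Classical

variable {V : Type*}

section Helpers
variable {W : Type*}

private lemma choose_two_add (p q : ℕ) : (p+q).choose 2 = p.choose 2 + q.choose 2 + p*q := by
  induction q with
  | zero => simp
  | succ n ih =>
    have h1 : p + (n+1) = (p+n) + 1 := by omega
    rw [h1, Nat.choose_succ_succ, Nat.choose_one_right, ih,
      Nat.choose_succ_succ, Nat.choose_one_right, Nat.mul_succ]
    ring

private lemma exists_max_card {α : Type*} [Fintype α] (P : Finset α → Prop) (h : P ∅) :
    ∃ M, P M ∧ ∀ M', P M' → M'.card ≤ M.card := by
  classical
  obtain ⟨M, hM, hmax⟩ := Finset.exists_max_image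
    ((Finset.univ : Finset (Finset α)).filter P) Finset.card
    ⟨∅, Finset.mem_filter.2 ⟨Finset.mem_univ _, h⟩⟩
  exact ⟨M, (Finset.mem_filter.1 hM).2,
    fun M' h' => hmax M' (Finset.mem_filter.2 ⟨Finset.mem_univ _, h'⟩)⟩

private lemma biUnion_card_le {α β : Type*} [DecidableEq β] (I : Finset α) (f : α → Finset β)
    (E : Finset β) (k : ℕ)
    (hdisj : ∀ x ∈ I, ∀ y ∈ I, x ≠ y → Disjoint (f x) (f y))
    (hsub : ∀ x ∈ I, f x ⊆ E) (hcard : ∀ x ∈ I, k ≤ (f x).card) :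
    I.card * k ≤ E.card := by
  calc I.card * k = ∑ _x ∈ I, k := by rw [Finset.sum_const, smul_eq_mul]
  _ ≤ ∑ x ∈ I, (f x).card := Finset.sum_le_sum hcard
  _ = (I.biUnion f).card := (Finset.card_biUnion hdisj).symm
  _ ≤ E.card := Finset.card_le_card (Finset.biUnion_subset.2 hsub)

private noncomputable def pureE (H : SimpleGraph W) (EF : Finset (Sym2 W)) (c : W → ℕ) (i : ℕ) :
    Finset (Sym2 W) := EF.filter (fun e => ∀ a ∈ e, c a = i)

private noncomputable def mixedE (H : SimpleGraph W) (EF : Finset (Sym2 W)) (c : W → ℕ) (j : ℕ) :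
    Finset (Sym2 W) := EF.filter (fun e => ∃ a b, e = s(a, b) ∧ c a = 1 ∧ c b = j)

private lemma pure_disj (H : SimpleGraph W) (EF : Finset (Sym2 W)) (c : W → ℕ) {i j : ℕ}
    (hij : i ≠ j) : Disjoint (pureE H EF c i) (pureE H EF c j) := by
  rw [Finset.disjoint_left]
  intro e he he'
  have h1 := (Finset.mem_filter.1 he).2
  have h2 := (Finset.mem_filter.1 he').2
  exact hij ((h1 _ (Sym2.out_fst_mem e)).symm.trans (h2 _ (Sym2.out_fst_mem e)))

private lemma pure_mixed_disj (H : SimpleGraph W) (EF : Finset (Sym2 W)) (c : W → ℕ) (i : ℕ)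
    {j : ℕ} (hj : j ≠ 1) : Disjoint (pureE H EF c i) (mixedE H EF c j) := by
  rw [Finset.disjoint_left]
  intro e he he'
  have h1 := (Finset.mem_filter.1 he).2
  obtain ⟨a, b, rfl, ha, hb⟩ := (Finset.mem_filter.1 he').2
  have h2 := h1 a (by rw [Sym2.mem_iff]; left; rfl)
  have h3 := h1 b (by rw [Sym2.mem_iff]; right; rfl)
  rw [ha] at h2; rw [hb] at h3; omega

private lemma mixed_disj (H : SimpleGraph W) (EF : Finset (Sym2 W)) (c : W → ℕ) {j j' : ℕ}
    (hj : j ≠ j') : Disjoint (mixedE H EF c j) (mixedE H EF c j') := by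
  rw [Finset.disjoint_left]
  intro e he he'
  obtain ⟨a, b, rfl, ha, hb⟩ := (Finset.mem_filter.1 he).2
  obtain ⟨a', b', heq, ha', hb'⟩ := (Finset.mem_filter.1 he').2
  rcases Sym2.eq_iff.1 heq with ⟨h1, h2⟩ | ⟨h1, h2⟩
  · rw [← h1] at ha'; rw [← h2] at hb'
    exact hj (hb.symm.trans hb')
  · rw [← h2] at ha'; rw [← h1] at hb'
    omega

private lemma clique_edge_count (H : SimpleGraph W)
    (EF : Finset (Sym2 W)) (hEF : ∀ e, e ∈ EF ↔ e ∈ H.edgeSet)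
    (S : Finset W) (hS : ∀ a ∈ S, ∀ b ∈ S, a ≠ b → H.Adj a b) :
    S.card.choose 2 ≤ (EF.filter (fun e => ∀ a ∈ e, a ∈ S)).card := by
  classical
  induction S using Finset.induction_on with
  | empty => simp
  | @insert a S ha ih =>
    have hclS : ∀ x ∈ S, ∀ y ∈ S, x ≠ y → H.Adj x y := fun x hx y hy =>
      hS x (Finset.mem_insert_of_mem hx) y (Finset.mem_insert_of_mem hy)
    have key : (EF.filter (fun e => ∀ x ∈ e, x ∈ S)) ∪ S.image (fun b => s(a,b)) ⊆
        EF.filter (fun e => ∀ x ∈ e, x ∈ insert a S) := by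
      intro e he
      rcases Finset.mem_union.1 he with h | h
      · simp only [Finset.mem_filter] at h ⊢
        exact ⟨h.1, fun x hx => Finset.mem_insert_of_mem (h.2 x hx)⟩
      · obtain ⟨b, hb, rfl⟩ := Finset.mem_image.1 h
        have hab : a ≠ b := fun h' => ha (h' ▸ hb)
        refine Finset.mem_filter.2 ⟨(hEF _).2 ?_, ?_⟩
        · exact hS a (Finset.mem_insert_self a S) b (Finset.mem_insert_of_mem hb) hab
        · intro x hx
          rcases Sym2.mem_iff.1 hx with rfl | rfl
          · exact Finset.mem_insert_self _ _
          · exact Finset.mem_insert_of_mem hb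
    have hdisj : Disjoint (EF.filter (fun e => ∀ x ∈ e, x ∈ S)) (S.image (fun b => s(a,b))) := by
      rw [Finset.disjoint_right]
      rintro e he hf
      obtain ⟨b, hb, rfl⟩ := Finset.mem_image.1 he
      have := (Finset.mem_filter.1 hf).2 a (by rw [Sym2.mem_iff]; left; rfl)
      exact ha this
    have himcard : (S.image (fun b => s(a,b))).card = S.card := by
      apply Finset.card_image_of_injOn
      intro x hx y hy hxy
      rcases Sym2.eq_iff.1 hxy with ⟨_, h⟩ | ⟨h1, h2⟩
      · exact h
      · exact h2.trans h1
    have hle := Finset.card_le_card key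
    rw [Finset.card_union_of_disjoint hdisj, himcard] at hle
    have ihh := ih hclS
    have hf : Nat.choose 1 2 = 0 := rfl
    rw [Finset.card_insert_of_notMem ha, choose_two_add S.card 1]
    omega

private lemma mem_pureE (H : SimpleGraph W) (EF : Finset (Sym2 W)) (c : W → ℕ) (i : ℕ)
    (e : Sym2 W) : e ∈ pureE H EF c i ↔ e ∈ EF ∧ ∀ a ∈ e, c a = i := Finset.mem_filter

private lemma mem_mixedE (H : SimpleGraph W) (EF : Finset (Sym2 W)) (c : W → ℕ) (j : ℕ)
    (e : Sym2 W) : e ∈ mixedE H EF c j ↔ e ∈ EF ∧ ∃ a b, e = s(a, b) ∧ c a = 1 ∧ c b = j :=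
  Finset.mem_filter

private lemma pureE_subset (H : SimpleGraph W) (EF : Finset (Sym2 W)) (c : W → ℕ) (i : ℕ) :
    pureE H EF c i ⊆ EF := Finset.filter_subset _ _

private lemma mixedE_subset (H : SimpleGraph W) (EF : Finset (Sym2 W)) (c : W → ℕ) (j : ℕ) :
    mixedE H EF c j ⊆ EF := Finset.filter_subset _ _

private lemma clique_pureE (H : SimpleGraph W)
    (EF : Finset (Sym2 W)) (hEF : ∀ e, e ∈ EF ↔ e ∈ H.edgeSet)
    (S : Finset W) (hS : ∀ a ∈ S, ∀ b ∈ S, a ≠ b → H.Adj a b)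
    (c : W → ℕ) (i : ℕ) (hSc : ∀ a ∈ S, c a = i) :
    S.card.choose 2 ≤ (pureE H EF c i).card := by
  refine le_trans (clique_edge_count H EF hEF S hS) (Finset.card_le_card ?_)
  intro e he
  rw [Finset.mem_filter] at he
  exact (mem_pureE H EF c i e).2 ⟨he.1, fun a ha => hSc a (he.2 a ha)⟩

end Helpers

/-- edge lower bound for graphs partitioned into `N_x, N_{xy}, N_y`
with `N_x, N_y` cliques and the two side-unions having independence number at most 2. -/
theorem stmt14 {W : Type*} [Fintype W] (H : SimpleGraph W)
    (Nx Nxy Ny : Set W)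
    (hdisj₁ : Disjoint Nx Nxy) (hdisj₂ : Disjoint Nx Ny) (hdisj₃ : Disjoint Nxy Ny)
    (hcover : Nx ∪ Nxy ∪ Ny = Set.univ)
    (hcliquex : H.IsClique Nx) (hcliquey : H.IsClique Ny)
    (hindx : ∀ a ∈ Nx ∪ Nxy, ∀ b ∈ Nx ∪ Nxy, ∀ c ∈ Nx ∪ Nxy,
      ¬ H.Adj a b → ¬ H.Adj a c → ¬ H.Adj b c → a = b ∨ a = c ∨ b = c)
    (hindy : ∀ a ∈ Nxy ∪ Ny, ∀ b ∈ Nxy ∪ Ny, ∀ c ∈ Nxy ∪ Ny,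
      ¬ H.Adj a b → ¬ H.Adj a c → ¬ H.Adj b c → a = b ∨ a = c ∨ b = c) :
    ∃ p : ℕ, 2 * p ≤ Nxy.ncard ∧
      H.edgeSet.ncard ≥
        Nat.choose Nx.ncard 2 + Nat.choose p 2 + Nat.choose (Nxy.ncard - p) 2 +
          Nat.choose Ny.ncard 2 + p * (Nx.ncard + Ny.ncard) := by
  classical
  have hNxf : Nx.Finite := Set.toFinite _
  have hNxyf : Nxy.Finite := Set.toFinite _
  have hNyf : Ny.Finite := Set.toFinite _
  have hEf : H.edgeSet.Finite := Set.toFinite _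
  set EF := hEf.toFinset with hEFdef
  have hEFmem : ∀ e, e ∈ EF ↔ e ∈ H.edgeSet := fun e => hEf.mem_toFinset
  -- independence consequences
  have hNxyInd : ∀ a ∈ Nxy, ∀ b ∈ Nxy, ∀ c ∈ Nxy, a ≠ b → a ≠ c → b ≠ c →
      ¬ H.Adj b c → H.Adj a b ∨ H.Adj a c := by
    intro a ha b hb c hc hab hac hbc hnadj
    by_contra hcon
    push_neg at hcon
    rcases hindx a (Or.inr ha) b (Or.inr hb) c (Or.inr hc) hcon.1 hcon.2 hnadj with h|h|h
    exacts [hab h, hac h, hbc h]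
  have hNxInd : ∀ a ∈ Nx, ∀ z1 ∈ Nxy, ∀ z2 ∈ Nxy, z1 ≠ z2 → ¬ H.Adj z1 z2 →
      H.Adj z1 a ∨ H.Adj z2 a := by
    intro a ha z1 h1 z2 h2 hne hnadj
    have ha1 : a ≠ z1 := fun h => Set.disjoint_left.1 hdisj₁ ha (by rw [h]; exact h1)
    have ha2 : a ≠ z2 := fun h => Set.disjoint_left.1 hdisj₁ ha (by rw [h]; exact h2)
    by_contra hcon
    push_neg at hcon
    have c1 : ¬ H.Adj a z1 := fun h => hcon.1 h.symm
    have c2 : ¬ H.Adj a z2 := fun h => hcon.2 h.symm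
    rcases hindx a (Or.inl ha) z1 (Or.inr h1) z2 (Or.inr h2) c1 c2 hnadj with h|h|h
    exacts [ha1 h, ha2 h, hne h]
  have hNyInd : ∀ a ∈ Ny, ∀ z1 ∈ Nxy, ∀ z2 ∈ Nxy, z1 ≠ z2 → ¬ H.Adj z1 z2 →
      H.Adj z1 a ∨ H.Adj z2 a := by
    intro a ha z1 h1 z2 h2 hne hnadj
    have ha1 : a ≠ z1 := fun h => Set.disjoint_left.1 hdisj₃ h1 (by rw [← h]; exact ha)
    have ha2 : a ≠ z2 := fun h => Set.disjoint_left.1 hdisj₃ h2 (by rw [← h]; exact ha)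
    by_contra hcon
    push_neg at hcon
    have c1 : ¬ H.Adj a z1 := fun h => hcon.1 h.symm
    have c2 : ¬ H.Adj a z2 := fun h => hcon.2 h.symm
    rcases hindy a (Or.inr ha) z1 (Or.inl h1) z2 (Or.inl h2) c1 c2 hnadj with h|h|h
    exacts [ha1 h, ha2 h, hne h]
  -- maximal matching of non-edges within Nxy
  obtain ⟨M, hMP, hMmax⟩ := exists_max_card
    (fun (M : Finset (W × W)) =>
      (∀ z ∈ M, z.1 ∈ Nxy ∧ z.2 ∈ Nxy ∧ ¬ H.Adj z.1 z.2 ∧ z.1 ≠ z.2) ∧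
      (∀ z ∈ M, ∀ w ∈ M, z ≠ w → z.1 ≠ w.1 ∧ z.1 ≠ w.2 ∧ z.2 ≠ w.1 ∧ z.2 ≠ w.2))
    ⟨fun z hz => absurd hz (Finset.notMem_empty z),
     fun z hz => absurd hz (Finset.notMem_empty z)⟩
  obtain ⟨hM1, hM2⟩ := hMP
  set U : Finset W := M.biUnion (fun z => {z.1, z.2}) with hUdef
  have hUof : ∀ z ∈ M, z.1 ∈ U ∧ z.2 ∈ U := by
    intro z hz
    constructor <;> (rw [hUdef]; exact Finset.mem_biUnion.2 ⟨z, hz, by simp⟩)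
  have hUto : ∀ a ∈ U, ∃ z ∈ M, a = z.1 ∨ a = z.2 := by
    intro a ha
    rw [hUdef] at ha
    obtain ⟨z, hz, hmem⟩ := Finset.mem_biUnion.1 ha
    rw [Finset.mem_insert, Finset.mem_singleton] at hmem
    exact ⟨z, hz, hmem⟩
  have hUuniq : ∀ z ∈ M, ∀ w ∈ M, ∀ a : W, (a = z.1 ∨ a = z.2) → (a = w.1 ∨ a = w.2) →
      z = w := by
    intro z hz w hw a h1 h2
    by_contra hne
    obtain ⟨n1, n2, n3, n4⟩ := hM2 z hz w hw hne
    rcases h1 with h1|h1 <;> rcases h2 with h2|h2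
    exacts [n1 (h1.symm.trans h2), n2 (h1.symm.trans h2),
      n3 (h1.symm.trans h2), n4 (h1.symm.trans h2)]
  have hUsub : ∀ a ∈ U, a ∈ Nxy := by
    intro a ha
    obtain ⟨z, hz, h|h⟩ := hUto a ha
    · rw [h]; exact (hM1 z hz).1
    · rw [h]; exact (hM1 z hz).2.1
  have hUcard : U.card = 2 * M.card := by
    have hdis : ∀ z ∈ M, ∀ w ∈ M, z ≠ w →
        Disjoint ({z.1, z.2} : Finset W) {w.1, w.2} := by
      intro z hz w hw hne
      obtain ⟨n1, n2, n3, n4⟩ := hM2 z hz w hw hne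
      rw [Finset.disjoint_left]
      intro a ha hb
      rw [Finset.mem_insert, Finset.mem_singleton] at ha hb
      rcases ha with h1|h1 <;> rcases hb with h2|h2
      exacts [n1 (h1.symm.trans h2).symm.symm, n2 (h1.symm.trans h2),
        n3 (h1.symm.trans h2), n4 (h1.symm.trans h2)]
    have h1 : ∑ z ∈ M, ({z.1, z.2} : Finset W).card = ∑ _z ∈ M, 2 :=
      Finset.sum_congr rfl (fun z hz => Finset.card_pair (hM1 z hz).2.2.2)
    rw [hUdef, Finset.card_biUnion hdis, h1, Finset.sum_const, smul_eq_mul, mul_comm]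
  set R : Finset W := hNxyf.toFinset \ U with hRdef
  have hUnxy : U ⊆ hNxyf.toFinset := fun a ha => hNxyf.mem_toFinset.2 (hUsub a ha)
  have hRcard : hNxyf.toFinset.card = 2 * M.card + R.card := by
    have h1 : R.card = hNxyf.toFinset.card - U.card := by
      rw [hRdef, Finset.card_sdiff_of_subset hUnxy]
    have h2 := Finset.card_le_card hUnxy
    omega
  have hRmem : ∀ a ∈ R, a ∈ Nxy ∧ a ∉ U := by
    intro a ha
    rw [hRdef, Finset.mem_sdiff] at ha
    exact ⟨hNxyf.mem_toFinset.1 ha.1, ha.2⟩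
  -- R is a clique
  have hRclique : ∀ u ∈ R, ∀ v ∈ R, u ≠ v → H.Adj u v := by
    intro u hu v hv huv
    by_contra hnadj
    obtain ⟨hun, hunU⟩ := hRmem u hu
    obtain ⟨hvn, hvnU⟩ := hRmem v hv
    have hnotM : (u, v) ∉ M := fun h => hunU (hUof _ h).1
    have hP1 : ∀ z ∈ insert (u, v) M, z.1 ∈ Nxy ∧ z.2 ∈ Nxy ∧ ¬ H.Adj z.1 z.2 ∧ z.1 ≠ z.2 := by
      intro z hz
      rcases Finset.mem_insert.1 hz with rfl | hz
      · exact ⟨hun, hvn, hnadj, huv⟩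
      · exact hM1 z hz
    have hP2 : ∀ z ∈ insert (u, v) M, ∀ w ∈ insert (u, v) M, z ≠ w →
        z.1 ≠ w.1 ∧ z.1 ≠ w.2 ∧ z.2 ≠ w.1 ∧ z.2 ≠ w.2 := by
      have key : ∀ w ∈ M, (u, v).1 ≠ w.1 ∧ (u, v).1 ≠ w.2 ∧ (u, v).2 ≠ w.1 ∧ (u, v).2 ≠ w.2 := by
        intro w hw
        refine ⟨fun h => hunU ?_, fun h => hunU ?_, fun h => hvnU ?_, fun h => hvnU ?_⟩
        · rw [show u = w.1 from h]; exact (hUof w hw).1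
        · rw [show u = w.2 from h]; exact (hUof w hw).2
        · rw [show v = w.1 from h]; exact (hUof w hw).1
        · rw [show v = w.2 from h]; exact (hUof w hw).2
      intro z hz w hw hzw
      rcases Finset.mem_insert.1 hz with rfl | hz <;> rcases Finset.mem_insert.1 hw with rfl | hw
      · exact absurd rfl hzw
      · exact key w hw
      · obtain ⟨n1, n2, n3, n4⟩ := key z hz
        exact ⟨fun h => n1 h.symm, fun h => n3 h.symm, fun h => n2 h.symm, fun h => n4 h.symm⟩
      · exact hM2 z hz w hw hzw
    have hc := hMmax _ ⟨hP1, hP2⟩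
    rw [Finset.card_insert_of_notMem hnotM] at hc
    omega
  -- the class function
  obtain ⟨c, hc0, hc3, hc1, hc2⟩ : ∃ c : W → ℕ, (∀ a ∈ Nx, c a = 0) ∧ (∀ a ∈ Ny, c a = 3) ∧
      (∀ a ∈ U, c a = 1) ∧ (∀ a ∈ R, c a = 2) := by
    refine ⟨fun a => if a ∈ Nx then 0 else if a ∈ Ny then 3 else if a ∈ U then 1 else 2,
      fun a ha => by simp [ha], fun a ha => ?_, fun a ha => ?_, fun a ha => ?_⟩
    · have h1 : a ∉ Nx := fun h => Set.disjoint_left.1 hdisj₂ h ha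
      simp [h1, ha]
    · have h1 : a ∈ Nxy := hUsub a ha
      have h2 : a ∉ Nx := fun h => Set.disjoint_left.1 hdisj₁ h h1
      have h3 : a ∉ Ny := fun h => Set.disjoint_left.1 hdisj₃ h1 h
      simp [h2, h3, ha]
    · obtain ⟨h1, hnU⟩ := hRmem a ha
      have h2 : a ∉ Nx := fun h => Set.disjoint_left.1 hdisj₁ h h1
      have h3 : a ∉ Ny := fun h => Set.disjoint_left.1 hdisj₃ h1 h
      simp [h2, h3, hnU]
  -- clique edge counts
  have hpure0 : hNxf.toFinset.card.choose 2 ≤ (pureE H EF c 0).card :=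
    clique_pureE H EF hEFmem hNxf.toFinset
      (fun a ha b hb hab => hcliquex (hNxf.mem_toFinset.1 ha) (hNxf.mem_toFinset.1 hb) hab)
      c 0 (fun a ha => hc0 a (hNxf.mem_toFinset.1 ha))
  have hpure3 : hNyf.toFinset.card.choose 2 ≤ (pureE H EF c 3).card :=
    clique_pureE H EF hEFmem hNyf.toFinset
      (fun a ha b hb hab => hcliquey (hNyf.mem_toFinset.1 ha) (hNyf.mem_toFinset.1 hb) hab)
      c 3 (fun a ha => hc3 a (hNyf.mem_toFinset.1 ha))
  have hpure2 : R.card.choose 2 ≤ (pureE H EF c 2).card :=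
    clique_pureE H EF hEFmem R hRclique c 2 hc2
  -- cross adjacency between matched pairs
  have hcross : ∀ x ∈ M, ∀ y ∈ M, x ≠ y → ∀ u, (u = x.1 ∨ u = x.2) →
      H.Adj u y.1 ∨ H.Adj u y.2 := by
    intro x hx y hy hxy u hu
    obtain ⟨hx1, hx2, _, _⟩ := hM1 x hx
    obtain ⟨hy1, hy2, hyadj, hyne⟩ := hM1 y hy
    obtain ⟨n1, n2, n3, n4⟩ := hM2 x hx y hy hxy
    rcases hu with rfl | rfl
    · exact hNxyInd x.1 hx1 y.1 hy1 y.2 hy2 n1 n2 hyne hyadj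
    · exact hNxyInd x.2 hx2 y.1 hy1 y.2 hy2 n3 n4 hyne hyadj
  -- edges between different matched pairs
  obtain ⟨F, hF⟩ : ∃ F : Finset (W × W) → Finset (Sym2 W),
      ∀ t ∈ M.powersetCard 2, ∃ x ∈ M, ∃ y ∈ M, x ≠ y ∧ t = {x, y} ∧
        ∃ w1 w2, (w1 = y.1 ∨ w1 = y.2) ∧ (w2 = y.1 ∨ w2 = y.2) ∧
          H.Adj x.1 w1 ∧ H.Adj x.2 w2 ∧ F t = {s(x.1, w1), s(x.2, w2)} := by
    refine ⟨fun t => if h : ∃ x : W × W, ∃ y : W × W, (x ∈ M ∧ y ∈ M ∧ x ≠ y) ∧ t = {x, y} then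
        {(if H.Adj h.choose.1 h.choose_spec.choose.1 then s(h.choose.1, h.choose_spec.choose.1)
          else s(h.choose.1, h.choose_spec.choose.2)),
         (if H.Adj h.choose.2 h.choose_spec.choose.1 then s(h.choose.2, h.choose_spec.choose.1)
          else s(h.choose.2, h.choose_spec.choose.2))}
      else ∅, ?_⟩
    intro t ht
    obtain ⟨hsub, hcard⟩ := Finset.mem_powersetCard.1 ht
    obtain ⟨x, y, hxy, rfl⟩ := Finset.card_eq_two.1 hcard
    have hx : x ∈ M := hsub (Finset.mem_insert_self _ _)
    have hy : y ∈ M := hsub (by simp)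
    have hex : ∃ x' : W × W, ∃ y' : W × W, (x' ∈ M ∧ y' ∈ M ∧ x' ≠ y') ∧
        ({x, y} : Finset (W × W)) = {x', y'} := ⟨x, y, ⟨hx, hy, hxy⟩, rfl⟩
    simp only [dif_pos hex]
    obtain ⟨⟨hx'M, hy'M, hne'⟩, hteq'⟩ := hex.choose_spec.choose_spec
    refine ⟨hex.choose, hx'M, hex.choose_spec.choose, hy'M, hne', hteq', ?_⟩
    by_cases hA : H.Adj hex.choose.1 hex.choose_spec.choose.1 <;>
      by_cases hB : H.Adj hex.choose.2 hex.choose_spec.choose.1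
    · exact ⟨_, _, Or.inl rfl, Or.inl rfl, hA, hB, by rw [if_pos hA, if_pos hB]⟩
    · have h2 := (hcross _ hx'M _ hy'M hne' hex.choose.2 (Or.inr rfl)).resolve_left hB
      exact ⟨_, _, Or.inl rfl, Or.inr rfl, hA, h2, by rw [if_pos hA, if_neg hB]⟩
    · have h1 := (hcross _ hx'M _ hy'M hne' hex.choose.1 (Or.inl rfl)).resolve_left hA
      exact ⟨_, _, Or.inr rfl, Or.inl rfl, h1, hB, by rw [if_neg hA, if_pos hB]⟩
    · have h1 := (hcross _ hx'M _ hy'M hne' hex.choose.1 (Or.inl rfl)).resolve_left hA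
      have h2 := (hcross _ hx'M _ hy'M hne' hex.choose.2 (Or.inr rfl)).resolve_left hB
      exact ⟨_, _, Or.inr rfl, Or.inr rfl, h1, h2, by rw [if_neg hA, if_neg hB]⟩
  have hpure1 : M.card.choose 2 * 2 ≤ (pureE H EF c 1).card := by
    have hb := biUnion_card_le (M.powersetCard 2) F (pureE H EF c 1) 2 ?_ ?_ ?_
    · rwa [Finset.card_powersetCard] at hb
    · -- disjoint
      intro t ht t' ht' htt'
      obtain ⟨x, hx, y, hy, hxy, hteq, w1, w2, hw1, hw2, ha1, ha2, hFt⟩ := hF t ht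
      obtain ⟨x', hx', y', hy', hxy', hteq', w1', w2', hw1', hw2', ha1', ha2', hFt'⟩ := hF t' ht'
      rw [Finset.disjoint_left, hFt, hFt']
      intro e he hf
      apply htt'
      rw [hteq, hteq']
      have key : ∀ u w u' w' : W, (u = x.1 ∨ u = x.2) → (w = y.1 ∨ w = y.2) →
          (u' = x'.1 ∨ u' = x'.2) → (w' = y'.1 ∨ w' = y'.2) → s(u, w) = s(u', w') →
          ({x, y} : Finset (W × W)) = {x', y'} := by
        intro u w u' w' hu hw hu' hw' heq
        rcases Sym2.eq_iff.1 heq with ⟨h1, h2⟩ | ⟨h1, h2⟩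
        · have e1 : x = x' := hUuniq x hx x' hx' u hu (by rw [h1]; exact hu')
          have e2 : y = y' := hUuniq y hy y' hy' w hw (by rw [h2]; exact hw')
          rw [e1, e2]
        · have e1 : x = y' := hUuniq x hx y' hy' u hu (by rw [h1]; exact hw')
          have e2 : y = x' := hUuniq y hy x' hx' w hw (by rw [h2]; exact hu')
          rw [e1, e2, Finset.pair_comm]
      simp only [Finset.mem_insert, Finset.mem_singleton] at he hf
      rcases he with rfl | rfl <;> rcases hf with h | h
      exacts [key _ _ _ _ (Or.inl rfl) hw1 (Or.inl rfl) hw1' h,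
        key _ _ _ _ (Or.inl rfl) hw1 (Or.inr rfl) hw2' h,
        key _ _ _ _ (Or.inr rfl) hw2 (Or.inl rfl) hw1' h,
        key _ _ _ _ (Or.inr rfl) hw2 (Or.inr rfl) hw2' h]
    · -- subset
      intro t ht e he
      obtain ⟨x, hx, y, hy, hxy, hteq, w1, w2, hw1, hw2, ha1, ha2, hFt⟩ := hF t ht
      rw [hFt] at he
      have hxU := hUof x hx
      have hyU := hUof y hy
      simp only [Finset.mem_insert, Finset.mem_singleton] at he
      rcases he with rfl | rfl
      · refine (mem_pureE H EF c 1 _).2 ⟨(hEFmem _).2 (H.mem_edgeSet.2 ha1), ?_⟩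
        intro a ha
        rcases Sym2.mem_iff.1 ha with rfl | rfl
        · exact hc1 _ hxU.1
        · rcases hw1 with rfl | rfl
          · exact hc1 _ hyU.1
          · exact hc1 _ hyU.2
      · refine (mem_pureE H EF c 1 _).2 ⟨(hEFmem _).2 (H.mem_edgeSet.2 ha2), ?_⟩
        intro a ha
        rcases Sym2.mem_iff.1 ha with rfl | rfl
        · exact hc1 _ hxU.2
        · rcases hw2 with rfl | rfl
          · exact hc1 _ hyU.1
          · exact hc1 _ hyU.2
    · -- card
      intro t ht
      obtain ⟨x, hx, y, hy, hxy, hteq, w1, w2, hw1, hw2, ha1, ha2, hFt⟩ := hF t ht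
      rw [hFt]
      have hne : s(x.1, w1) ≠ s(x.2, w2) := by
        intro h
        obtain ⟨n1, n2, n3, n4⟩ := hM2 x hx y hy hxy
        have hx12 := (hM1 x hx).2.2.2
        rcases Sym2.eq_iff.1 h with ⟨h1, h2⟩ | ⟨h1, h2⟩
        · exact hx12 h1
        · rcases hw2 with h3 | h3 <;> rw [h3] at h1
          exacts [n1 h1, n2 h1]
      rw [Finset.card_pair hne]
  -- generic mixed bound
  have hGen : ∀ (T : Finset W) (j : ℕ), (∀ a ∈ T, c a = j) → (∀ a ∈ T, a ∉ U) →
      (∀ a ∈ T, ∀ z ∈ M, H.Adj z.1 a ∨ H.Adj z.2 a) →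
      M.card * T.card ≤ (mixedE H EF c j).card := by
    intro T j hTc hTU hTadj
    have shape : ∀ zt : (W × W) × W, zt ∈ M ×ˢ T → ∃ u, (u = zt.1.1 ∨ u = zt.1.2) ∧
        H.Adj u zt.2 ∧
        (if H.Adj zt.1.1 zt.2 then s(zt.1.1, zt.2) else s(zt.1.2, zt.2)) = s(u, zt.2) := by
      intro zt hmem
      obtain ⟨hzM, haT⟩ := Finset.mem_product.1 hmem
      by_cases h : H.Adj zt.1.1 zt.2
      · exact ⟨zt.1.1, Or.inl rfl, h, if_pos h⟩
      · have h' := (hTadj zt.2 haT zt.1 hzM).resolve_left h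
        exact ⟨zt.1.2, Or.inr rfl, h', if_neg h⟩
    have hb := biUnion_card_le (M ×ˢ T)
      (fun zt => {if H.Adj zt.1.1 zt.2 then s(zt.1.1, zt.2) else s(zt.1.2, zt.2)})
      (mixedE H EF c j) 1 ?_ ?_ ?_
    · rw [Finset.card_product, Nat.mul_one] at hb
      exact hb
    · intro zt h1 wt h2 hne
      obtain ⟨hzM, haT⟩ := Finset.mem_product.1 h1
      obtain ⟨hwM, hbT⟩ := Finset.mem_product.1 h2
      obtain ⟨u, hu, hadj1, heq1⟩ := shape zt h1
      obtain ⟨u', hu', hadj2, heq2⟩ := shape wt h2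
      rw [Finset.disjoint_left]
      intro e he hf
      simp only [Finset.mem_singleton] at he hf
      rw [heq1] at he
      rw [heq2] at hf
      rw [he] at hf
      have huU : u ∈ U := by
        rcases hu with rfl | rfl
        exacts [(hUof _ hzM).1, (hUof _ hzM).2]
      rcases Sym2.eq_iff.1 hf with ⟨h1', h2'⟩ | ⟨h1', h2'⟩
      · have e1 : zt.1 = wt.1 := hUuniq _ hzM _ hwM u hu (by rw [h1']; exact hu')
        exact hne (Prod.ext e1 h2')
      · exact hTU _ hbT (by rw [← h1']; exact huU)
    · intro zt hmem e he
      obtain ⟨hzM, haT⟩ := Finset.mem_product.1 hmem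
      obtain ⟨u, hu, hadj, heq1⟩ := shape zt hmem
      simp only [Finset.mem_singleton] at he
      rw [heq1] at he
      rw [he]
      have huU : u ∈ U := by
        rcases hu with rfl | rfl
        exacts [(hUof _ hzM).1, (hUof _ hzM).2]
      exact (mem_mixedE H EF c j _).2 ⟨(hEFmem _).2 (H.mem_edgeSet.2 hadj),
        ⟨u, zt.2, rfl, hc1 u huU, hTc _ haT⟩⟩
    · intro zt _
      simp
  -- the three mixed bounds
  have hmix2 : M.card * R.card ≤ (mixedE H EF c 2).card := by
    refine hGen R 2 hc2 (fun a ha => (hRmem a ha).2) (fun a ha z hz => ?_)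
    obtain ⟨haN, hanU⟩ := hRmem a ha
    obtain ⟨h1, h2, hadj, hne⟩ := hM1 z hz
    have d1 : a ≠ z.1 := fun h => hanU (by rw [h]; exact (hUof z hz).1)
    have d2 : a ≠ z.2 := fun h => hanU (by rw [h]; exact (hUof z hz).2)
    rcases hNxyInd a haN z.1 h1 z.2 h2 d1 d2 hne hadj with h | h
    exacts [Or.inl h.symm, Or.inr h.symm]
  have hmix0 : M.card * hNxf.toFinset.card ≤ (mixedE H EF c 0).card := by
    refine hGen hNxf.toFinset 0 (fun a ha => hc0 a (hNxf.mem_toFinset.1 ha))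
      (fun a ha h => Set.disjoint_left.1 hdisj₁ (hNxf.mem_toFinset.1 ha) (hUsub a h))
      (fun a ha z hz => ?_)
    exact hNxInd a (hNxf.mem_toFinset.1 ha) z.1 (hM1 z hz).1 z.2 (hM1 z hz).2.1
      (hM1 z hz).2.2.2 (hM1 z hz).2.2.1
  have hmix3 : M.card * hNyf.toFinset.card ≤ (mixedE H EF c 3).card := by
    refine hGen hNyf.toFinset 3 (fun a ha => hc3 a (hNyf.mem_toFinset.1 ha))
      (fun a ha h => Set.disjoint_left.1 hdisj₃ (hUsub a h) (hNyf.mem_toFinset.1 ha))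
      (fun a ha z hz => ?_)
    exact hNyInd a (hNyf.mem_toFinset.1 ha) z.1 (hM1 z hz).1 z.2 (hM1 z hz).2.1
      (hM1 z hz).2.2.2 (hM1 z hz).2.2.1
  -- assemble the union
  have hd6 : Disjoint (mixedE H EF c 0) (mixedE H EF c 3) := mixed_disj H EF c (by omega)
  have hd5 : Disjoint (mixedE H EF c 2) (mixedE H EF c 0 ∪ mixedE H EF c 3) :=
    Finset.disjoint_union_right.2 ⟨mixed_disj H EF c (by omega), mixed_disj H EF c (by omega)⟩
  have hd4 : Disjoint (pureE H EF c 1)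
      (mixedE H EF c 2 ∪ (mixedE H EF c 0 ∪ mixedE H EF c 3)) :=
    Finset.disjoint_union_right.2 ⟨pure_mixed_disj H EF c 1 (by omega),
      Finset.disjoint_union_right.2 ⟨pure_mixed_disj H EF c 1 (by omega),
        pure_mixed_disj H EF c 1 (by omega)⟩⟩
  have hd3 : Disjoint (pureE H EF c 2)
      (pureE H EF c 1 ∪ (mixedE H EF c 2 ∪ (mixedE H EF c 0 ∪ mixedE H EF c 3))) :=
    Finset.disjoint_union_right.2 ⟨pure_disj H EF c (by omega),
      Finset.disjoint_union_right.2 ⟨pure_mixed_disj H EF c 2 (by omega),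
        Finset.disjoint_union_right.2 ⟨pure_mixed_disj H EF c 2 (by omega),
          pure_mixed_disj H EF c 2 (by omega)⟩⟩⟩
  have hd2 : Disjoint (pureE H EF c 3)
      (pureE H EF c 2 ∪ (pureE H EF c 1 ∪ (mixedE H EF c 2 ∪ (mixedE H EF c 0 ∪ mixedE H EF c 3)))) :=
    Finset.disjoint_union_right.2 ⟨pure_disj H EF c (by omega),
      Finset.disjoint_union_right.2 ⟨pure_disj H EF c (by omega),
        Finset.disjoint_union_right.2 ⟨pure_mixed_disj H EF c 3 (by omega),
          Finset.disjoint_union_right.2 ⟨pure_mixed_disj H EF c 3 (by omega),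
            pure_mixed_disj H EF c 3 (by omega)⟩⟩⟩⟩
  have hd1 : Disjoint (pureE H EF c 0)
      (pureE H EF c 3 ∪ (pureE H EF c 2 ∪ (pureE H EF c 1 ∪ (mixedE H EF c 2 ∪ (mixedE H EF c 0 ∪ mixedE H EF c 3))))) :=
    Finset.disjoint_union_right.2 ⟨pure_disj H EF c (by omega),
      Finset.disjoint_union_right.2 ⟨pure_disj H EF c (by omega),
        Finset.disjoint_union_right.2 ⟨pure_disj H EF c (by omega),
          Finset.disjoint_union_right.2 ⟨pure_mixed_disj H EF c 0 (by omega),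
            Finset.disjoint_union_right.2 ⟨pure_mixed_disj H EF c 0 (by omega),
              pure_mixed_disj H EF c 0 (by omega)⟩⟩⟩⟩⟩
  have hunion : pureE H EF c 0 ∪ (pureE H EF c 3 ∪ (pureE H EF c 2 ∪ (pureE H EF c 1 ∪
      (mixedE H EF c 2 ∪ (mixedE H EF c 0 ∪ mixedE H EF c 3))))) ⊆ EF := by
    refine Finset.union_subset (pureE_subset H EF c 0) (Finset.union_subset
      (pureE_subset H EF c 3) (Finset.union_subset (pureE_subset H EF c 2)
      (Finset.union_subset (pureE_subset H EF c 1) (Finset.union_subset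
      (mixedE_subset H EF c 2) (Finset.union_subset (mixedE_subset H EF c 0)
      (mixedE_subset H EF c 3))))))
  have hbig : (pureE H EF c 0).card + (pureE H EF c 3).card + (pureE H EF c 2).card +
      (pureE H EF c 1).card + (mixedE H EF c 2).card + (mixedE H EF c 0).card +
      (mixedE H EF c 3).card ≤ EF.card := by
    have h := Finset.card_le_card hunion
    rw [Finset.card_union_of_disjoint hd1, Finset.card_union_of_disjoint hd2,
      Finset.card_union_of_disjoint hd3, Finset.card_union_of_disjoint hd4,
      Finset.card_union_of_disjoint hd5, Finset.card_union_of_disjoint hd6] at h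
    omega
  -- finish
  refine ⟨M.card, ?_, ?_⟩
  · rw [Set.ncard_eq_toFinset_card Nxy hNxyf]
    omega
  · rw [Set.ncard_eq_toFinset_card Nx hNxf, Set.ncard_eq_toFinset_card Nxy hNxyf,
      Set.ncard_eq_toFinset_card Ny hNyf, Set.ncard_eq_toFinset_card _ hEf]
    have harith : hNxyf.toFinset.card - M.card = M.card + R.card := by omega
    rw [harith, choose_two_add M.card R.card, Nat.mul_add]
    have h2 : 2 * M.card.choose 2 = M.card.choose 2 * 2 := by ring
    linarith [hpure0, hpure3, hpure2, hpure1, hmix2, hmix0, hmix3, hbig]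
end

section
/- For real numbers d_x, d_{xy}, d_y, p satisfying d_x + d_{xy} ≤ 1, d_y + d_{xy} ≤ 1, 0 ≤ p ≤ d_{xy}/2, and d_x, d_{xy}, d_y, p ≥ 0, the function f(d_x, d_{xy}, d_y, p) = d_x + d_{xy} + d_y − (1/2)d_x² − (1/2)p² − (1/2)(d_{xy} − p)² − (1/2)d_y² − p(d_x + d_y) satisfies f ≤ 7/6, with the maximum value 7/6 attained (e.g., at d_x = d_y = 2/3, d_{xy} = 1/3, p = 0). -/
open Classical

variable {V : Type*}

/-- the constrained maximum of
`f(dx,dxy,dy,p) = dx + dxy + dy - dx²/2 - p²/2 - (dxy-p)²/2 - dy²/2 - p(dx+dy)` is `7/6`. -/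
theorem stmt15 :
    (∀ dx dxy dy p : ℝ, dx + dxy ≤ 1 → dy + dxy ≤ 1 → 0 ≤ p → p ≤ dxy / 2 →
      0 ≤ dx → 0 ≤ dxy → 0 ≤ dy →
      dx + dxy + dy - (1 / 2) * dx ^ 2 - (1 / 2) * p ^ 2 - (1 / 2) * (dxy - p) ^ 2 -
        (1 / 2) * dy ^ 2 - p * (dx + dy) ≤ 7 / 6) ∧
    ((2 : ℝ) / 3 + 1 / 3 + 2 / 3 - (1 / 2) * (2 / 3) ^ 2 - (1 / 2) * (0 : ℝ) ^ 2 -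
        (1 / 2) * ((1 : ℝ) / 3 - 0) ^ 2 - (1 / 2) * (2 / 3) ^ 2 - 0 * (2 / 3 + 2 / 3)
      = 7 / 6) := by
  constructor
  · intro dx dxy dy p h1 h2 h3 h4 h5 h6 h7
    rcases le_or_gt dxy (dx + dy) with hc | hc
    · nlinarith [mul_nonneg h3 (by linarith : (0:ℝ) ≤ p + dx + dy - dxy),
        sq_nonneg (dxy - 1/3), sq_nonneg (1 - dx - dxy), sq_nonneg (1 - dy - dxy),
        mul_nonneg (by linarith : (0:ℝ) ≤ 1 - dx - dxy) h6,
        mul_nonneg (by linarith : (0:ℝ) ≤ 1 - dy - dxy) h6]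
    · nlinarith [sq_nonneg (2*p - dxy + dx + dy), sq_nonneg (dx - dy),
        mul_nonneg (by linarith : (0:ℝ) ≤ dxy - dx - dy) (by linarith : (0:ℝ) ≤ 2 - 2*dxy - dx - dy),
        sq_nonneg (dxy - 2/3),
        mul_nonneg (by linarith : (0:ℝ) ≤ dxy - dx - dy) (by linarith : (0:ℝ) ≤ 1 - dxy),
        mul_nonneg (by linarith : (0:ℝ) ≤ 2 - 2*dxy - dx - dy) (by linarith : (0:ℝ) ≤ 1 - dxy)]
  · norm_num
end

section
/- Let G be a claw-free graph and M an induced matching of G that is maximal and stable under the local-search exchange operation. For any edge xy ∈ M, with N₁ the set of vertices of (N_G(x) ∪ N_G(y)) \ {x,y} incident with a private conflict edge of xy and N₂ the set of vertices outside N_G[x] ∪ N_G[y] incident with a private conflict edge of xy, every vertex of N₁ has at most one neighbor in N₂; consequently the number of edges between N₁ and N₂ is at most |N₁|. -/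
open Classical

variable {V : Type*}

/-- in claw-free graphs, each vertex of `N₁` has at most one neighbor
in `N₂`, hence `m_G(N₁, N₂) ≤ |N₁|`. -/
theorem stmt19 [Fintype V] (G : SimpleGraph V) (hclaw : ClawFree G)
    (M : Set (Sym2 V)) (hmax : IsMaximalInducedMatching G M) (hstab : LSStable G M)
    (x y : V) (hxy : G.Adj x y) (hmem : s(x, y) ∈ M)
    (N₁ N₂ : Set V)
    (hN₁ : N₁ = {v : V | v ∈ (G.neighborSet x ∪ G.neighborSet y) \ {x, y} ∧
      ∃ e ∈ PCSet G M s(x, y), v ∈ e})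
    (hN₂ : N₂ = {v : V | v ∉ (G.neighborSet x ∪ {x}) ∪ (G.neighborSet y ∪ {y}) ∧
      ∃ e ∈ PCSet G M s(x, y), v ∈ e}) :
    (∀ u ∈ N₁, (G.neighborSet u ∩ N₂).ncard ≤ 1) ∧
    (edgesBetween G N₁ N₂).ncard ≤ N₁.ncard := by
  classical
  obtain ⟨⟨hMsub, hMind⟩, hMmax⟩ := hmax
  have hsym : ∀ e f : Sym2 V, Conflict G e f → Conflict G f e := by
    rintro e f ⟨a, ha, b, hb, h⟩
    exact ⟨b, hb, a, ha, h.imp Eq.symm G.adj_symm⟩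
  -- privacy: a private conflict edge of xy conflicts with no other edge of M
  have hpriv : ∀ e ∈ PCSet G M s(x, y), ∀ f ∈ M, f ≠ s(x, y) → ¬ Conflict G f e := by
    intro e he f hf hne hc
    exact he.2 (Set.mem_biUnion (show f ∈ M \ {s(x,y)} from ⟨hf, hne⟩) ⟨he.1.1, hc⟩)
  -- basic properties of N₂ members
  have hN₂prop : ∀ w ∈ N₂, w ≠ x ∧ w ≠ y ∧ ¬ G.Adj x w ∧ ¬ G.Adj y w ∧
      ∃ e ∈ PCSet G M s(x, y), w ∈ e := by
    intro w hw
    rw [hN₂] at hw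
    obtain ⟨h1, h2⟩ := hw
    simp only [Set.mem_union, SimpleGraph.mem_neighborSet, Set.mem_singleton_iff] at h1
    push_neg at h1
    exact ⟨h1.1.2, h1.2.2, h1.1.1, h1.2.1, h2⟩
  -- basic properties of N₁ members
  have hN₁prop : ∀ u ∈ N₁, (G.Adj u x ∨ G.Adj u y) := by
    intro u hu
    rw [hN₁] at hu
    rcases hu.1.1 with h | h
    · exact Or.inl h.symm
    · exact Or.inr h.symm
  -- N₂ is independent
  have hind : ∀ w₁ ∈ N₂, ∀ w₂ ∈ N₂, ¬ G.Adj w₁ w₂ := by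
    intro w₁ hw₁ w₂ hw₂ hadj
    obtain ⟨hw₁x, hw₁y, hw₁ax, hw₁ay, e₁, he₁, hwe₁⟩ := hN₂prop w₁ hw₁
    obtain ⟨hw₂x, hw₂y, hw₂ax, hw₂ay, e₂, he₂, hwe₂⟩ := hN₂prop w₂ hw₂
    have hgE : s(w₁, w₂) ∈ G.edgeSet := hadj
    have hgne : s(w₁, w₂) ≠ s(x, y) := by
      intro h
      rw [Sym2.eq_iff] at h
      rcases h with ⟨h, _⟩ | ⟨h, _⟩
      · exact hw₁x h
      · exact hw₁y h
    -- s(w₁,w₂) conflicts with no edge of M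
    have hnc : ∀ f ∈ M, ¬ Conflict G f s(w₁, w₂) := by
      rintro f hf ⟨a, ha, b, hb, hrel⟩
      by_cases hfe : f = s(x, y)
      · subst hfe
        rw [Sym2.mem_iff] at ha hb
        rcases ha with rfl | rfl <;> rcases hb with rfl | rfl <;>
          rcases hrel with h | h
        · exact hw₁x h.symm
        · exact hw₁ax h
        · exact hw₂x h.symm
        · exact hw₂ax h
        · exact hw₁y h.symm
        · exact hw₁ay h
        · exact hw₂y h.symm
        · exact hw₂ay h
      · rw [Sym2.mem_iff] at hb
        rcases hb with rfl | rfl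
        · exact hpriv e₁ he₁ f hf hfe ⟨a, ha, b, hwe₁, hrel⟩
        · exact hpriv e₂ he₂ f hf hfe ⟨a, ha, b, hwe₂, hrel⟩
    have hgM : s(w₁, w₂) ∉ M := by
      intro hgm
      exact hnc _ hgm ⟨w₁, Sym2.mem_mk_left _ _, w₁, Sym2.mem_mk_left _ _, Or.inl rfl⟩
    -- insert it into M, contradicting maximality
    have : insert s(w₁, w₂) M = M := by
      apply hMmax
      · constructor
        · intro e he
          rcases he with rfl | he
          · exact hgE
          · exact hMsub he
        · intro e he f hf hef hc
          rcases he with rfl | he <;> rcases hf with rfl | hf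
          · exact hef rfl
          · exact hnc f hf (hsym _ _ hc)
          · exact hnc e he hc
          · exact hMind e he f hf hef hc
      · exact Set.subset_insert _ _
    exact hgM (this ▸ Set.mem_insert _ _)
  -- key: each u ∈ N₁ has at most one neighbor in N₂
  have hkey : ∀ u ∈ N₁, ∀ w₁ w₂ : V, G.Adj u w₁ → G.Adj u w₂ →
      w₁ ∈ N₂ → w₂ ∈ N₂ → w₁ = w₂ := by
    intro u hu w₁ w₂ h1 h2 hn1 hn2
    by_contra hne
    obtain ⟨hw₁x, hw₁y, hw₁ax, hw₁ay, _⟩ := hN₂prop w₁ hn1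
    obtain ⟨hw₂x, hw₂y, hw₂ax, hw₂ay, _⟩ := hN₂prop w₂ hn2
    rcases hN₁prop u hu with hux | huy
    · exact hclaw ⟨u, x, w₁, w₂, hux, h1, h2, hw₁ax, hw₂ax,
        hind w₁ hn1 w₂ hn2, fun h => hw₁x h.symm, fun h => hw₂x h.symm, hne⟩
    · exact hclaw ⟨u, y, w₁, w₂, huy, h1, h2, hw₁ay, hw₂ay,
        hind w₁ hn1 w₂ hn2, fun h => hw₁y h.symm, fun h => hw₂y h.symm, hne⟩
  have part1 : ∀ u ∈ N₁, (G.neighborSet u ∩ N₂).ncard ≤ 1 := by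
    intro u hu
    have hss : (G.neighborSet u ∩ N₂).Subsingleton := by
      intro a ha b hb
      exact hkey u hu a b ha.1 hb.1 ha.2 hb.2
    rcases hss.eq_empty_or_singleton with h | ⟨a, h⟩ <;> rw [h] <;> simp
  refine ⟨part1, ?_⟩
  -- N₁ and N₂ are disjoint
  have hdisj : ∀ v : V, v ∈ N₁ → v ∈ N₂ → False := by
    intro v h1 h2
    obtain ⟨_, _, hax, hay, _⟩ := hN₂prop v h2
    rcases hN₁prop v h1 with h | h
    · exact hax h.symm
    · exact hay h.symm
  -- injection from edges between N₁ and N₂ to N₁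
  have hmapsto : ∀ e ∈ edgesBetween G N₁ N₂,
      (if h : ∃ a ∈ N₁, a ∈ e then h.choose else x) ∈ N₁ := by
    rintro e ⟨heE, a, b, rfl, haN, hbN⟩
    have h : ∃ a' ∈ N₁, a' ∈ (s(a, b) : Sym2 V) := ⟨a, haN, Sym2.mem_mk_left _ _⟩
    simp only [dif_pos h]
    exact h.choose_spec.1
  have hinj : Set.InjOn (fun e : Sym2 V => if h : ∃ a ∈ N₁, a ∈ e then h.choose else x)
      (edgesBetween G N₁ N₂) := by
    rintro e₁ ⟨h1E, a₁, b₁, rfl, ha₁, hb₁⟩ e₂ ⟨h2E, a₂, b₂, rfl, ha₂, hb₂⟩ heq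
    have hex1 : ∃ a' ∈ N₁, a' ∈ (s(a₁, b₁) : Sym2 V) := ⟨a₁, ha₁, Sym2.mem_mk_left _ _⟩
    have hex2 : ∃ a' ∈ N₁, a' ∈ (s(a₂, b₂) : Sym2 V) := ⟨a₂, ha₂, Sym2.mem_mk_left _ _⟩
    simp only [dif_pos hex1, dif_pos hex2] at heq
    obtain ⟨hu1N, hu1m⟩ := hex1.choose_spec
    obtain ⟨hu2N, hu2m⟩ := hex2.choose_spec
    rw [← heq] at hu2m
    -- the chosen vertex must be the N₁ endpoint of each
    have he1 : hex1.choose = a₁ := by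
      rcases Sym2.mem_iff.1 hu1m with h | h
      · exact h
      · rw [h] at hu1N; exact (hdisj _ hu1N hb₁).elim
    have he2 : hex1.choose = a₂ := by
      rcases Sym2.mem_iff.1 hu2m with h | h
      · exact h
      · rw [h] at hu1N; exact (hdisj _ hu1N hb₂).elim
    have ha : a₁ = a₂ := he1 ▸ he2
    have hadj1 : G.Adj a₁ b₁ := h1E
    have hadj2 : G.Adj a₁ b₂ := ha ▸ h2E
    have hb : b₁ = b₂ := hkey a₁ ha₁ b₁ b₂ hadj1 hadj2 hb₁ hb₂
    rw [ha, hb]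
  exact Set.ncard_le_ncard_of_injOn _ hmapsto hinj (Set.toFinite N₁)
end
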